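/- arXiv:1403.7412 — 2 statements merged into one kernel-verified Lean document; each statement's English description precedes it below -/
import Mathlib

section
/- There exist sequences of positive reals $\{a_{mj}\}_{j\ge 1}$, $1\le m \le n$ (with $n\ge 2$), such that $\sum_{j=1}^\infty (a_{1j}\cdots a_{nj})^{1/n} < \infty$ while for every $1\le m\le n$, $\sum_{j=1}^\infty \min(a_{1j},\dots,a_{m-1,j},a_{m+1,j},\dots,a_{nj}) = \infty$. -/
open Filter

/-- There exist positive sequences `a_{mj}` (`1 ≤ m ≤ n`, `n ≥ 2`) whose columnwise geometric
means are summable, while for every `m` the sums of the minima over the remaining rows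
diverge to `+∞`. -/
theorem stmt2 (n : ℕ) (hn : 2 ≤ n) :
    ∃ a : Fin n → ℕ → ℝ,
      (∀ m j, 0 < a m j) ∧
      (Summable fun j => (∏ m, a m j) ^ ((1 : ℝ) / n)) ∧
      ∀ m : Fin n,
        Tendsto (fun N => ∑ j ∈ Finset.range N, ⨅ l : {l : Fin n // l ≠ m}, a l.1 j)
          atTop atTop := by
  have hn0 : 0 < n := by omega
  refine ⟨fun m j => if (m : ℕ) = j % n then (1/2 : ℝ)^(n*j) else 1, ?_, ?_, ?_⟩
  · intro m j
    dsimp only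
    split <;> positivity
  · have hprod : ∀ j : ℕ,
        (∏ m : Fin n, if (m : ℕ) = j % n then (1/2 : ℝ)^(n*j) else 1)
          = (1/2 : ℝ)^(n*j) := by
      intro j
      rw [Finset.prod_eq_single (⟨j % n, Nat.mod_lt j hn0⟩ : Fin n)]
      · simp
      · intro b _ hb
        rw [if_neg]
        intro h
        exact hb (Fin.ext h)
      · simp
    have key : ∀ j : ℕ,
        ((∏ m : Fin n, if (m : ℕ) = j % n then (1/2 : ℝ)^(n*j) else 1)) ^ ((1:ℝ)/n)
          = (1/2 : ℝ)^j := by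
      intro j
      rw [hprod j, ← Real.rpow_natCast ((1/2:ℝ)) (n*j), ← Real.rpow_mul (by norm_num),
        ← Real.rpow_natCast ((1/2:ℝ)) j]
      congr 1
      field_simp
      exact Nat.cast_mul n j
    simp only [key]
    exact summable_geometric_of_lt_one (by norm_num) (by norm_num)
  · intro m
    haveI : Nontrivial (Fin n) := Fin.nontrivial_iff_two_le.mpr hn
    obtain ⟨l0, hl0⟩ := exists_ne m
    haveI : Nonempty {l : Fin n // l ≠ m} := ⟨⟨l0, hl0⟩⟩
    set g : ℕ → ℝ := fun j => if j % n = (m : ℕ) then 1 else 0 with hg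
    have hle : ∀ N, ∑ j ∈ Finset.range N, g j ≤
        ∑ j ∈ Finset.range N, ⨅ l : {l : Fin n // l ≠ m},
          (if (l.1 : ℕ) = j % n then (1/2 : ℝ)^(n*j) else 1) := by
      intro N
      apply Finset.sum_le_sum
      intro j _
      by_cases h : j % n = (m : ℕ)
      · have : (⨅ l : {l : Fin n // l ≠ m},
            (if (l.1 : ℕ) = j % n then (1/2 : ℝ)^(n*j) else 1)) = 1 := by
          have : ∀ l : {l : Fin n // l ≠ m},
              (if (l.1 : ℕ) = j % n then (1/2 : ℝ)^(n*j) else 1) = 1 := by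
            intro l
            rw [if_neg]
            intro hc
            exact l.2 (Fin.ext (by rw [hc, h]))
          simp only [this]
          exact ciInf_const
        rw [this, hg]
        simp [h]
      · have : (0:ℝ) ≤ ⨅ l : {l : Fin n // l ≠ m},
            (if (l.1 : ℕ) = j % n then (1/2 : ℝ)^(n*j) else 1) := by
          apply Real.iInf_nonneg
          intro l
          split <;> positivity
        rw [hg]
        simpa [h] using this
    have hgdiv : Tendsto (fun N => ∑ j ∈ Finset.range N, g j) atTop atTop := by
      apply tendsto_atTop_atTop_of_monotone
      · intro N M hNM
        apply Finset.sum_le_sum_of_subset_of_nonneg (Finset.range_subset_range.mpr hNM)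
        intro j _ _
        by_cases h : j % n = (m : ℕ) <;> simp [hg, h]
      · intro b
        obtain ⟨k, hk⟩ := exists_nat_ge b
        refine ⟨k * n + (m : ℕ) + 1, hk.trans ?_⟩
        have hsub : (Finset.range k).image (fun i => i * n + (m : ℕ))
            ⊆ (Finset.range (k * n + (m : ℕ) + 1)).filter (fun j => j % n = (m : ℕ)) := by
          intro x hx
          simp only [Finset.mem_image, Finset.mem_range] at hx
          obtain ⟨i, hi, rfl⟩ := hx
          simp only [Finset.mem_filter, Finset.mem_range]
          refine ⟨by nlinarith, ?_⟩
          rw [Nat.add_mod, Nat.mul_mod_left, Nat.zero_add,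
            Nat.mod_mod_of_dvd _ dvd_rfl, Nat.mod_eq_of_lt m.isLt]
        have hcard : k ≤ ((Finset.range (k * n + (m : ℕ) + 1)).filter
            (fun j => j % n = (m : ℕ))).card := by
          calc k = ((Finset.range k).image (fun i => i * n + (m : ℕ))).card := by
                rw [Finset.card_image_of_injective _
                  (fun a b hab => Nat.eq_of_mul_eq_mul_right hn0
                    (Nat.add_right_cancel hab)), Finset.card_range]
            _ ≤ _ := Finset.card_le_card hsub
        have hsum : ∑ j ∈ Finset.range (k * n + (m : ℕ) + 1), g j
            = ((Finset.range (k * n + (m : ℕ) + 1)).filter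
              (fun j => j % n = (m : ℕ))).card := by
          simp [hg, Finset.sum_boole]
        rw [hsum]
        exact_mod_cast hcard
    exact tendsto_atTop_mono hle hgdiv
end

section
/- Define $u(z)=\sum_{j=1}^\infty \max\left(\frac{1}{2^j}\log\frac{|z_1-2^{-j}|}{|1-2^{-j}z_1|},\; \frac{2^j}{j}\log|z_2|,\; \log|z_3|,\dots,\log|z_n|,\; -2^j\right)$ on the unit polydisc $\Delta^n$ (with $n\ge 2$). Then $u(z)>-\infty$ for every $z\in\Delta^n$ (the series converges). -/
open Filter Topology

noncomputable section

/-- Extended logarithm: `elog 0 = ⊥`. -/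
def elog (x : ℝ) : EReal := if x = 0 then ⊥ else ((Real.log x : ℝ) : EReal)

/-- The `j`-th term of the series defining `u`:
`max( 2^{-j} log (|z₁-2^{-j}|/|1-2^{-j}z₁|), (2^j/j) log|z₂|, log|z₃|, …, log|z_n|, -2^j )`,
with values in `EReal` (so that `log 0 = -∞`). -/
def term9 {n : ℕ} (hn : 2 ≤ n) (z : Fin n → ℂ) (j : ℕ) : EReal :=
  max
    (max
      ((((1 : ℝ) / 2 ^ j : ℝ) : EReal) *
        elog (‖z ⟨0, by omega⟩ - (1 : ℂ) / 2 ^ j‖ /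
              ‖1 - z ⟨0, by omega⟩ / 2 ^ j‖))
      ((((2 : ℝ) ^ j / j : ℝ) : EReal) * elog (‖z ⟨1, by omega⟩‖)))
    (max
      (⨆ i : Fin n, if 2 ≤ (i : ℕ) then elog ‖z i‖ else ⊥)
      (((-(2 : ℝ) ^ j : ℝ) : EReal)))

lemma elog_nonpos {x : ℝ} (hx : 0 ≤ x) (hx1 : x ≤ 1) : elog x ≤ 0 := by
  unfold elog
  split_ifs with h
  · exact bot_le
  · exact_mod_cast Real.log_nonpos hx hx1

lemma ereal_coe_sum (f : ℕ → ℝ) (N : ℕ) :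
    ((∑ j ∈ Finset.range N, f j : ℝ) : EReal) = ∑ j ∈ Finset.range N, ((f j : ℝ) : EReal) := by
  induction N with
  | zero => simp
  | succ N ih => rw [Finset.sum_range_succ, Finset.sum_range_succ, ← ih]; push_cast; ring

/-- The series `u(z) = ∑_{j≥1} term9 j z` converges to a finite value (`u(z) > -∞`)
at every point of the unit polydisc. -/
theorem stmt9 (n : ℕ) (hn : 2 ≤ n) (z : Fin n → ℂ)
    (hz : ∀ i, ‖z i‖ < 1) :
    ∃ L : ℝ, Tendsto (fun N => ∑ j ∈ Finset.range N, term9 hn z (j + 1))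
      atTop (𝓝 ((L : ℝ) : EReal)) := by
  set z1 : ℂ := z ⟨0, by omega⟩ with hz1def
  set z2 : ℂ := z ⟨1, by omega⟩ with hz2def
  have hz1 : ‖z1‖ < 1 := hz _
  have hz2 : ‖z2‖ < 1 := hz _
  -- notation for the ratio
  set num : ℕ → ℝ := fun j => ‖z1 - (1 : ℂ) / 2 ^ j‖ with hnum
  set den : ℕ → ℝ := fun j => ‖1 - z1 / 2 ^ j‖ with hden
  set r : ℕ → ℝ := fun j => num j / den j with hr
  have h2j : ∀ j : ℕ, (0:ℝ) < 2 ^ j := fun j => by positivity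
  have habs_w : ∀ j : ℕ, ‖(1:ℂ) / 2 ^ j‖ = 1 / 2 ^ j := by
    intro j
    rw [norm_div, norm_one]
    congr 1
    rw [show ((2:ℂ) ^ j) = (((2:ℝ) ^ j : ℝ) : ℂ) by push_cast; ring, Complex.norm_real, Real.norm_eq_abs]
    exact abs_of_pos (h2j j)
  have hden_pos : ∀ j : ℕ, 0 < den j := by
    intro j
    have h1 : ‖z1 / 2 ^ j‖ = ‖z1‖ / 2 ^ j := by
      rw [norm_div]
      congr 1
      rw [show ((2:ℂ) ^ j) = (((2:ℝ) ^ j : ℝ) : ℂ) by push_cast; ring, Complex.norm_real, Real.norm_eq_abs]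
      exact abs_of_pos (h2j j)
    have h2 : ‖z1‖ / 2 ^ j < 1 := by
      have h3 : (1:ℝ) ≤ 2 ^ j := one_le_pow₀ (by norm_num : (1:ℝ) ≤ 2)
      calc ‖z1‖ / 2 ^ j ≤ ‖z1‖ := div_le_self (norm_nonneg _) h3
        _ < 1 := hz1
    have htri : ‖(1:ℂ)‖ - ‖z1 / 2 ^ j‖ ≤ ‖(1:ℂ) - z1 / 2 ^ j‖ := norm_sub_norm_le _ _
    simp only [norm_one] at htri
    have : (0:ℝ) < 1 - ‖z1 / 2 ^ j‖ := by rw [h1]; linarith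
    calc (0:ℝ) < 1 - ‖z1 / 2 ^ j‖ := this
      _ ≤ ‖1 - z1 / 2 ^ j‖ := by
          have h4 : ‖(1:ℂ)‖ = 1 := norm_one
          linarith [htri]
      _ = den j := rfl
  have hr_nonneg : ∀ j, 0 ≤ r j := fun j => div_nonneg (norm_nonneg _) (le_of_lt (hden_pos j))
  have hr_lt_one : ∀ j, 1 ≤ j → r j < 1 := by
    intro j hj
    rw [hr, div_lt_one (hden_pos j)]
    refine lt_of_pow_lt_pow_left₀ 2 (norm_nonneg _) ?_
    rw [Complex.sq_norm, Complex.sq_norm]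
    have hw1 : (1:ℂ) / 2 ^ j = (((1:ℝ) / 2 ^ j : ℝ) : ℂ) := by push_cast; ring
    have hw2 : z1 / 2 ^ j = z1 * (((1:ℝ) / 2 ^ j : ℝ) : ℂ) := by push_cast; field_simp
    set w : ℝ := (1:ℝ) / 2 ^ j with hw
    have hwpos : 0 < w := by positivity
    have hwlt : w < 1 := by
      rw [hw, div_lt_one (h2j j)]
      calc (1:ℝ) < 2 := one_lt_two
        _ ≤ 2 ^ j := le_self_pow₀ (by norm_num) (by omega)
    rw [hw1, hw2]
    simp only [Complex.normSq_apply, Complex.sub_re, Complex.sub_im, Complex.one_re,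
      Complex.one_im, Complex.mul_re, Complex.mul_im, Complex.ofReal_re, Complex.ofReal_im]
    have habs : z1.re * z1.re + z1.im * z1.im < 1 := by
      have h1 := Complex.sq_norm z1
      rw [Complex.normSq_apply] at h1
      nlinarith [hz1, norm_nonneg z1]
    have hfac : (0:ℝ) < (1 - w * w) * (1 - (z1.re * z1.re + z1.im * z1.im)) := by
      apply mul_pos
      · nlinarith
      · linarith
    nlinarith [hfac]
  -- the four components, upper bounds
  have hC_le : (⨆ i : Fin n, if 2 ≤ (i : ℕ) then elog (‖z i‖) else ⊥) ≤ (0 : EReal) := by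
    apply iSup_le
    intro i
    split_ifs
    · exact elog_nonpos (norm_nonneg _) (le_of_lt (hz i))
    · exact bot_le
  have hterm_le : ∀ j, 1 ≤ j → term9 hn z j ≤ 0 := by
    intro j hj
    unfold term9
    apply max_le
    · apply max_le
      · have hgoal : (((1 : ℝ) / 2 ^ j : ℝ) : EReal) * elog (r j) ≤ 0 := by
          rcases eq_or_ne (r j) 0 with h0 | h0
          · unfold elog
            rw [if_pos h0, EReal.coe_mul_bot_of_pos (by positivity)]
            exact bot_le
          · unfold elog
            rw [if_neg h0, ← EReal.coe_mul]
            have : (1:ℝ) / 2 ^ j * Real.log (r j) ≤ 0 :=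
              mul_nonpos_of_nonneg_of_nonpos (by positivity)
                (Real.log_nonpos (hr_nonneg j) (le_of_lt (hr_lt_one j hj)))
            exact_mod_cast this
        exact hgoal
      · rcases eq_or_ne (‖z ⟨1, by omega⟩‖) 0 with h0 | h0
        · unfold elog
          rw [if_pos h0, EReal.coe_mul_bot_of_pos (by positivity)]
          exact bot_le
        · unfold elog
          rw [if_neg h0, ← EReal.coe_mul]
          have : (2:ℝ) ^ j / j * Real.log (‖z ⟨1, by omega⟩‖) ≤ 0 :=
            mul_nonpos_of_nonneg_of_nonpos (by positivity)
              (Real.log_nonpos (norm_nonneg _) (le_of_lt (hz _)))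
          exact_mod_cast this
    · apply max_le hC_le
      have : (-(2:ℝ) ^ j : ℝ) ≤ 0 := neg_nonpos.mpr (le_of_lt (h2j j))
      exact_mod_cast this
  have hterm_ge : ∀ j, ((-(2:ℝ) ^ j : ℝ) : EReal) ≤ term9 hn z j := by
    intro j
    unfold term9
    exact le_max_of_le_right (le_max_right _ _)
  -- real valued terms
  set t : ℕ → ℝ := fun j => (term9 hn z (j + 1)).toReal with ht
  have hterm_ne_bot : ∀ j : ℕ, term9 hn z (j + 1) ≠ ⊥ := by
    intro j
    intro h
    have := hterm_ge (j + 1)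
    rw [h, le_bot_iff] at this
    exact EReal.coe_ne_bot _ this
  have hterm_ne_top : ∀ j : ℕ, term9 hn z (j + 1) ≠ ⊤ := by
    intro j
    intro h
    have := hterm_le (j + 1) (by omega)
    rw [h] at this
    exact absurd this (by simp)
  have hcoe : ∀ j : ℕ, ((t j : ℝ) : EReal) = term9 hn z (j + 1) := fun j =>
    EReal.coe_toReal (hterm_ne_top j) (hterm_ne_bot j)
  have ht_nonpos : ∀ j, t j ≤ 0 := by
    intro j
    have := hterm_le (j + 1) (by omega)
    rw [← hcoe j] at this
    exact_mod_cast this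
  -- lower bound: ∃ C ≥ 0, j₀, ∀ j ≥ j₀, t j ≥ -C * (j+1) * (1/2)^(j+1)
  have hA_le : ∀ j : ℕ, ((((1 : ℝ) / 2 ^ (j+1) : ℝ) : EReal) * elog (r (j+1))) ≤ term9 hn z (j+1) := by
    intro j
    unfold term9
    exact le_max_of_le_left (le_max_left _ _)
  have key : ∃ C : ℝ, 0 ≤ C ∧ ∃ j₀ : ℕ, ∀ j ≥ j₀,
      -C * ((j:ℝ) + 1) * (1/2 : ℝ) ^ (j+1) ≤ t j := by
    rcases eq_or_ne z1 0 with h0 | h0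
    · refine ⟨Real.log 2, Real.log_nonneg one_le_two, 0, fun j _ => ?_⟩
      have hrval : r (j+1) = 1 / 2 ^ (j+1) := by
        rw [hr]
        simp only [hnum, hden, h0, zero_sub, norm_neg, zero_div, sub_zero, norm_one, div_one]
        exact habs_w (j+1)
      have hA := hA_le j
      rw [hrval] at hA
      have hne : (1:ℝ) / 2 ^ (j+1) ≠ 0 := by positivity
      unfold elog at hA
      rw [if_neg hne, ← EReal.coe_mul] at hA
      rw [← hcoe j] at hA
      have hA' : (1:ℝ) / 2 ^ (j+1) * Real.log (1 / 2 ^ (j+1)) ≤ t j := by exact_mod_cast hA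
      have hlog : Real.log ((1:ℝ) / 2 ^ (j+1)) = -(((j:ℝ)+1) * Real.log 2) := by
        rw [one_div, Real.log_inv, Real.log_pow]
        push_cast; ring
      rw [hlog] at hA'
      calc -Real.log 2 * ((j:ℝ) + 1) * (1/2 : ℝ) ^ (j+1)
          = (1:ℝ) / 2 ^ (j+1) * -(((j:ℝ)+1) * Real.log 2) := by
            rw [div_pow, one_pow]; ring
        _ ≤ t j := hA'
    · set ε : ℝ := ‖z1‖ with hε
      have hεpos : 0 < ε := by
        rw [hε]
        exact norm_pos_iff.mpr h0
      obtain ⟨j₀, hj₀⟩ := exists_pow_lt_of_lt_one (show (0:ℝ) < ε / 2 by linarith)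
        (show (1/2 : ℝ) < 1 by norm_num)
      refine ⟨-Real.log (ε / 4), ?_, j₀, fun j hj => ?_⟩
      · have : Real.log (ε / 4) ≤ 0 :=
          Real.log_nonpos (by positivity) (by linarith)
        linarith
      · have hwle : (1:ℝ) / 2 ^ (j+1) < ε / 2 := by
          calc (1:ℝ) / 2 ^ (j+1) = (1/2 : ℝ) ^ (j+1) := by rw [div_pow, one_pow]
            _ ≤ (1/2 : ℝ) ^ j₀ := pow_le_pow_of_le_one (by norm_num) (by norm_num) (by omega)
            _ < ε / 2 := hj₀
        have hnum_ge : ε / 2 ≤ num (j+1) := by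
          have h1 := norm_sub_norm_le z1 ((1:ℂ) / 2 ^ (j+1))
          rw [habs_w (j+1)] at h1
          have h2 : ε - 1 / 2 ^ (j+1) ≤ num (j+1) := h1
          linarith
        have hden_le : den (j+1) ≤ 2 := by
          have h1 : den (j+1) ≤ ‖(1:ℂ)‖ + ‖z1 / 2 ^ (j+1)‖ := by
            simpa [hden, sub_eq_add_neg] using norm_add_le 1 (-(z1 / 2 ^ (j+1)))
          have h2 : ‖z1 / 2 ^ (j+1)‖ ≤ 1 := by
            rw [norm_div]
            rw [show ((2:ℂ) ^ (j+1)) = (((2:ℝ) ^ (j+1) : ℝ) : ℂ) by push_cast; ring,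
              Complex.norm_real, Real.norm_eq_abs, abs_of_pos (h2j (j+1))]
            rw [div_le_one (h2j (j+1))]
            calc ‖z1‖ ≤ 1 := le_of_lt hz1
              _ ≤ 2 ^ (j+1) := one_le_pow₀ (by norm_num : (1:ℝ) ≤ 2)
          rw [norm_one] at h1
          linarith
        have hr_ge : ε / 4 ≤ r (j+1) := by
          rw [hr]
          rw [div_le_div_iff₀ (by norm_num) (hden_pos (j+1))]
          calc ε * den (j+1) ≤ ε * 2 := by nlinarith [hden_pos (j+1)]
            _ = (ε / 2) * 4 := by ring
            _ ≤ num (j+1) * 4 := by linarith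
        have hrpos : 0 < r (j+1) := lt_of_lt_of_le (by positivity) hr_ge
        have hA := hA_le j
        unfold elog at hA
        rw [if_neg (ne_of_gt hrpos), ← EReal.coe_mul, ← hcoe j] at hA
        have hA' : (1:ℝ) / 2 ^ (j+1) * Real.log (r (j+1)) ≤ t j := by exact_mod_cast hA
        have hlog_ge : Real.log (ε / 4) ≤ Real.log (r (j+1)) :=
          Real.log_le_log (by positivity) hr_ge
        calc -(-Real.log (ε / 4)) * ((j:ℝ) + 1) * (1/2 : ℝ) ^ (j+1)
            = Real.log (ε / 4) * ((j:ℝ) + 1) * (1/2 : ℝ) ^ (j+1) := by ring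
          _ ≤ Real.log (ε / 4) * 1 * (1/2 : ℝ) ^ (j+1) := by
              have h1 : Real.log (ε / 4) ≤ 0 := Real.log_nonpos (by positivity) (by linarith)
              have h2 : (0:ℝ) ≤ (1/2 : ℝ) ^ (j+1) := by positivity
              have h3 : (1:ℝ) ≤ (j:ℝ) + 1 := by
                have := Nat.cast_nonneg (α := ℝ) j
                linarith
              nlinarith [mul_nonneg (mul_nonneg (sub_nonneg.mpr h3) (neg_nonneg.mpr h1)) h2]
          _ = (1/2 : ℝ) ^ (j+1) * Real.log (ε / 4) := by ring
          _ ≤ (1/2 : ℝ) ^ (j+1) * Real.log (r (j+1)) := by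
              have h2 : (0:ℝ) ≤ (1/2 : ℝ) ^ (j+1) := by positivity
              exact mul_le_mul_of_nonneg_left hlog_ge h2
          _ = (1:ℝ) / 2 ^ (j+1) * Real.log (r (j+1)) := by rw [div_pow, one_pow]
          _ ≤ t j := hA'
  obtain ⟨C, hC0, j₀, hkey⟩ := key
  -- summable minorant
  set g : ℕ → ℝ := fun j => -C * ((j:ℝ) + 1) * (1/2 : ℝ) ^ (j+1) with hg
  have hg_summable : Summable g := by
    have h1 : Summable (fun j : ℕ => (j:ℝ) * (1/2 : ℝ) ^ j) := by
      have := summable_pow_mul_geometric_of_norm_lt_one (R := ℝ) 1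
        (r := (1/2 : ℝ)) (by rw [Real.norm_eq_abs]; rw [abs_of_pos] <;> norm_num)
      simpa using this
    have h2 : Summable (fun j : ℕ => ((j:ℝ)+1) * (1/2 : ℝ) ^ (j+1)) := by
      have h3 := (summable_nat_add_iff (f := fun j : ℕ => (j:ℝ) * (1/2 : ℝ) ^ j) 1).mpr h1
      exact h3.congr (fun j => by push_cast; ring_nf)
    simpa [hg, mul_assoc] using h2.mul_left (-C)
  set b : ℕ → ℝ := fun j => min (t j) (g j) with hb
  have hb_summable : Summable b := by
    rw [← summable_nat_add_iff j₀]
    have heq : (fun j : ℕ => b (j + j₀)) = fun j : ℕ => g (j + j₀) := by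
      funext j
      exact min_eq_right (hkey (j + j₀) (by omega))
    rw [heq]
    exact (summable_nat_add_iff j₀).mpr hg_summable
  have hb_nonpos : ∀ j, b j ≤ 0 := fun j => le_trans (min_le_left _ _) (ht_nonpos j)
  -- partial sums
  set S : ℕ → ℝ := fun N => ∑ j ∈ Finset.range N, t j with hS
  have hS_anti : Antitone S := by
    apply antitone_nat_of_succ_le
    intro N
    rw [hS]
    simp only [Finset.sum_range_succ]
    have := ht_nonpos N
    linarith [ht_nonpos N]
  have hS_bdd : BddBelow (Set.range S) := by
    refine ⟨-(∑' j, (-b j)), ?_⟩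
    rintro x ⟨N, rfl⟩
    have h1 : ∑ j ∈ Finset.range N, (-b j) ≤ ∑' j, (-b j) :=
      Summable.sum_le_tsum (Finset.range N) (fun j _ => neg_nonneg.mpr (hb_nonpos j)) hb_summable.neg
    have h2 : ∑ j ∈ Finset.range N, b j ≤ S N :=
      Finset.sum_le_sum (fun j _ => min_le_left _ _)
    have h3 : ∑ j ∈ Finset.range N, (-b j) = -∑ j ∈ Finset.range N, b j := by
      rw [Finset.sum_neg_distrib]
    linarith [h1, h2, h3.ge, h3.le]
  have hS_tendsto : Tendsto S atTop (𝓝 (⨅ N, S N)) := tendsto_atTop_ciInf hS_anti hS_bdd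
  refine ⟨⨅ N, S N, ?_⟩
  have hfuneq : (fun N => ∑ j ∈ Finset.range N, term9 hn z (j + 1))
      = fun N => ((S N : ℝ) : EReal) := by
    funext N
    rw [hS]
    rw [ereal_coe_sum]
    exact Finset.sum_congr rfl (fun j _ => (hcoe j).symm)
  rw [hfuneq]
  exact EReal.tendsto_coe.mpr hS_tendsto
end
end
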